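/- Let C_lin > 0 and 0 < q_lin < 1, and let s > 0. Let (η_n)_{n∈ℕ} be positive reals satisfying η_n ≤ C_lin·q_lin^{n-m}·η_m for all m ≤ n (full R-linear convergence), and let (T_n)_{n∈ℕ} be positive reals with definitions M(s) = sup_n T_n^s·η_n and cost(n) = ∑_{m ≤ n} T_m. Then M(s) ≤ sup_n cost(n)^s·η_n ≤ (C_lin/(1 - q_lin^{1/s})^s)·M(s). -/

import Mathlib

open scoped ENNReal

lemma geom_sum_le_inv_one_sub {r : ℝ} (hr0 : 0 ≤ r) (hr1 : r < 1) (N : ℕ) :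
    ∑ k ∈ Finset.range N, r ^ k ≤ (1 - r)⁻¹ := by
  have h1r : (0:ℝ) < 1 - r := by linarith
  rw [geom_sum_eq hr1.ne, ← neg_div_neg_eq, neg_sub, neg_sub, inv_eq_one_div]
  apply div_le_div₀ (by norm_num) _ h1r le_rfl
  nlinarith [pow_nonneg hr0 N]

lemma rates_cost_aux (Clin qlin s : ℝ) (hClin : 0 < Clin) (hq0 : 0 < qlin)
    (hq1 : qlin < 1) (hs : 0 < s)
    (η T : ℕ → ℝ) (hη : ∀ n, 0 < η n) (hT : ∀ n, 0 < T n)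
    (hlin : ∀ m n : ℕ, m ≤ n → η n ≤ Clin * qlin ^ (n - m) * η m)
    (n : ℕ) (M : ℝ) (hM : 0 < M)
    (hbd : ∀ m ∈ Finset.range (n + 1), T m ^ s * η m ≤ M) :
    (∑ m ∈ Finset.range (n + 1), T m) ^ s * η n
      ≤ Clin / (1 - qlin ^ (1 / s)) ^ s * M := by
  set r : ℝ := qlin ^ (1 / s) with hr
  have hr0 : 0 ≤ r := Real.rpow_nonneg hq0.le _
  have hr1 : r < 1 := Real.rpow_lt_one hq0.le hq1 (by positivity)
  have h1r : (0:ℝ) < 1 - r := by linarith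
  have hηn := hη n
  -- per-term bound
  have key : ∀ m ∈ Finset.range (n + 1),
      T m ≤ (M * Clin / η n) ^ (1 / s) * r ^ (n - m) := by
    intro m hm
    have hmn : m ≤ n := Nat.lt_succ_iff.mp (Finset.mem_range.mp hm)
    have h1 : T m ^ s * η m ≤ M := hbd m hm
    have h2 : η n ≤ Clin * qlin ^ (n - m) * η m := hlin m n hmn
    have hTm := hT m
    have hηm := hη m
    have h3 : T m ^ s ≤ M * Clin * qlin ^ (n - m) / η n := by
      rw [le_div_iff₀ hηn]
      calc T m ^ s * η n ≤ T m ^ s * (Clin * qlin ^ (n - m) * η m) := by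
            apply mul_le_mul_of_nonneg_left h2 (by positivity)
        _ = (T m ^ s * η m) * (Clin * qlin ^ (n - m)) := by ring
        _ ≤ M * (Clin * qlin ^ (n - m)) := by
            apply mul_le_mul_of_nonneg_right h1 (by positivity)
        _ = M * Clin * qlin ^ (n - m) := by ring
    have h4 : T m = (T m ^ s) ^ (1 / s) := by
      rw [one_div, Real.rpow_rpow_inv hTm.le hs.ne']
    rw [h4]
    calc (T m ^ s) ^ (1 / s) ≤ (M * Clin * qlin ^ (n - m) / η n) ^ (1 / s) :=
          Real.rpow_le_rpow (by positivity) h3 (by positivity)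
      _ = (M * Clin / η n) ^ (1 / s) * r ^ (n - m) := by
          rw [show M * Clin * qlin ^ (n - m) / η n
              = (M * Clin / η n) * qlin ^ (n - m) by ring]
          rw [Real.mul_rpow (by positivity) (by positivity)]
          congr 1
          rw [← Real.rpow_natCast qlin (n - m), ← Real.rpow_mul hq0.le,
            hr, ← Real.rpow_natCast (qlin ^ (1/s)) (n - m),
            ← Real.rpow_mul hq0.le]
          ring_nf
  -- sum bound
  have hsum : ∑ m ∈ Finset.range (n + 1), T m
      ≤ (M * Clin / η n) ^ (1 / s) * (1 - r)⁻¹ := by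
    calc ∑ m ∈ Finset.range (n + 1), T m
        ≤ ∑ m ∈ Finset.range (n + 1), (M * Clin / η n) ^ (1 / s) * r ^ (n - m) :=
          Finset.sum_le_sum key
      _ = (M * Clin / η n) ^ (1 / s) * ∑ m ∈ Finset.range (n + 1), r ^ (n - m) := by
          rw [Finset.mul_sum]
      _ = (M * Clin / η n) ^ (1 / s) * ∑ k ∈ Finset.range (n + 1), r ^ k := by
          congr 1
          rw [← Finset.sum_range_reflect (fun k => r ^ k) (n + 1)]
          apply Finset.sum_congr rfl
          intro k _
          congr 1
      _ ≤ (M * Clin / η n) ^ (1 / s) * (1 - r)⁻¹ := by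
          apply mul_le_mul_of_nonneg_left
            (geom_sum_le_inv_one_sub hr0 hr1 (n + 1)) (by positivity)
  -- raise to power s
  have hpos : (0:ℝ) < ∑ m ∈ Finset.range (n + 1), T m :=
    Finset.sum_pos (fun i _ => hT i) (by simp)
  have h5 : (∑ m ∈ Finset.range (n + 1), T m) ^ s
      ≤ (M * Clin / η n) * ((1 - r)⁻¹) ^ s := by
    calc (∑ m ∈ Finset.range (n + 1), T m) ^ s
        ≤ ((M * Clin / η n) ^ (1 / s) * (1 - r)⁻¹) ^ s :=
          Real.rpow_le_rpow hpos.le hsum hs.le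
      _ = (M * Clin / η n) * ((1 - r)⁻¹) ^ s := by
          rw [Real.mul_rpow (by positivity) (by positivity), one_div,
            Real.rpow_inv_rpow (by positivity) hs.ne']
  have hpw : (0:ℝ) < (1 - r) ^ s := Real.rpow_pos_of_pos h1r s
  calc (∑ m ∈ Finset.range (n + 1), T m) ^ s * η n
      ≤ (M * Clin / η n) * ((1 - r)⁻¹) ^ s * η n :=
        mul_le_mul_of_nonneg_right h5 hηn.le
    _ = Clin / (1 - r) ^ s * M := by
        rw [Real.inv_rpow h1r.le]
        field_simp

/-- Rates with respect to degrees of freedom versus computational cost: under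
full R-linear convergence the two rate suprema are equivalent (in `ℝ≥0∞`). -/
theorem rates_dof_iff_cost
    (Clin qlin s : ℝ) (hClin : 0 < Clin) (hq0 : 0 < qlin) (hq1 : qlin < 1)
    (hs : 0 < s)
    (η T : ℕ → ℝ) (hη : ∀ n, 0 < η n) (hT : ∀ n, 0 < T n)
    (hlin : ∀ m n : ℕ, m ≤ n → η n ≤ Clin * qlin ^ (n - m) * η m) :
    (⨆ n : ℕ, ENNReal.ofReal ((T n) ^ s * η n)) ≤
      (⨆ n : ℕ, ENNReal.ofReal ((∑ m ∈ Finset.range (n + 1), T m) ^ s * η n)) ∧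
    (⨆ n : ℕ, ENNReal.ofReal ((∑ m ∈ Finset.range (n + 1), T m) ^ s * η n)) ≤
      ENNReal.ofReal (Clin / (1 - qlin ^ (1 / s)) ^ s) *
        (⨆ n : ℕ, ENNReal.ofReal ((T n) ^ s * η n)) := by
  constructor
  · refine iSup_mono fun n => ENNReal.ofReal_le_ofReal ?_
    have hTc : T n ≤ ∑ m ∈ Finset.range (n + 1), T m :=
      Finset.single_le_sum (f := T) (fun i _ => (hT i).le)
        (Finset.self_mem_range_succ n)
    exact mul_le_mul_of_nonneg_right
      (Real.rpow_le_rpow (hT n).le hTc hs.le) (hη n).le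
  · refine iSup_le fun n => ?_
    obtain ⟨m0, hm0, hMn_eq⟩ := Finset.exists_mem_eq_sup'
      (s := Finset.range (n + 1)) (by simp) (fun m => T m ^ s * η m)
    have hMpos : 0 < T m0 ^ s * η m0 :=
      mul_pos (Real.rpow_pos_of_pos (hT m0) s) (hη m0)
    have hbd : ∀ m ∈ Finset.range (n + 1), T m ^ s * η m ≤ T m0 ^ s * η m0 :=
      fun m hm => hMn_eq ▸ Finset.le_sup' (fun m => T m ^ s * η m) hm
    have hfinal := rates_cost_aux Clin qlin s hClin hq0 hq1 hs η T hη hT hlin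
      n (T m0 ^ s * η m0) hMpos hbd
    calc ENNReal.ofReal ((∑ m ∈ Finset.range (n + 1), T m) ^ s * η n)
        ≤ ENNReal.ofReal (Clin / (1 - qlin ^ (1 / s)) ^ s * (T m0 ^ s * η m0)) :=
          ENNReal.ofReal_le_ofReal hfinal
      _ = ENNReal.ofReal (Clin / (1 - qlin ^ (1 / s)) ^ s) *
            ENNReal.ofReal (T m0 ^ s * η m0) := by
          rw [ENNReal.ofReal_mul]
          have hr1 : qlin ^ (1 / s) < 1 :=
            Real.rpow_lt_one hq0.le hq1 (by positivity)
          have hpw : (0:ℝ) < (1 - qlin ^ (1 / s)) ^ s :=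
            Real.rpow_pos_of_pos (by linarith) s
          positivity
      _ ≤ ENNReal.ofReal (Clin / (1 - qlin ^ (1 / s)) ^ s) *
            ⨆ n : ℕ, ENNReal.ofReal ((T n) ^ s * η n) := by
          exact mul_le_mul_right
            (le_iSup (fun n => ENNReal.ofReal ((T n) ^ s * η n)) m0) _
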